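/- Let θ be a regular uncountable cardinal. If there is a (θ,ω)-gap in (ω^ω, ≤*), then there is a (θ,ω)-good set. -/

import Mathlib

open Cardinal Set

universe u

/-- `f ≤⁺ g`: there is `k` such that for every `α`, `f α ≤ g α` or `f α ≤ k`. -/
def LePlus {I : Type u} (f g : I → ℕ) : Prop :=
  ∃ k : ℕ, ∀ α, f α ≤ g α ∨ f α ≤ k

/-- `f ≤* g`: `f α ≤ g α` for all but finitely many `α`. -/
def LeStar {I : Type u} (f g : I → ℕ) : Prop :=
  {α | ¬ f α ≤ g α}.Finite

/-- The trace `V_g × U_f` of a basic neighborhood of `(∞,∞)` in `F_θ × F_λ`. -/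
def VU {Θ Λ : Type u} (g : Θ → ℕ) (f : Λ → ℕ) : Set ((Θ × ℕ) × (Λ × ℕ)) :=
  {p | g p.1.1 < p.1.2 ∧ f p.2.1 < p.2.2}

/-- `A` is a `(θ,ω)`-good set, where `θ = #Θ` (clauses (a)–(c)). -/
def IsGoodOmega {Θ : Type} (A : Set ((Θ × ℕ) × (ℕ × ℕ))) : Prop :=
  (∀ (g : Θ → ℕ) (f : ℕ → ℕ), (A ∩ VU g f).Nonempty) ∧
  (∀ B ⊆ A, #B < #Θ → ∃ (g : Θ → ℕ) (f : ℕ → ℕ), B ∩ VU g f = ∅) ∧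
  (∀ E : Set ℕ, E.Finite →
    ∃ (g : Θ → ℕ) (f : ℕ → ℕ), A ∩ {p | p.2.1 ∈ E} ∩ VU g f = ∅)

/-- If `f ≤* g` on `ℕ`, then beyond `sSup {m | ¬ f m ≤ g m}` we have `f m ≤ g m`. -/
lemma leStar_bound {f g : ℕ → ℕ} (h : LeStar f g) {m : ℕ}
    (hm : sSup {m | ¬ f m ≤ g m} < m) : f m ≤ g m := by
  by_contra hc
  exact absurd (le_csSup h.bddAbove (by exact hc : m ∈ {m | ¬ f m ≤ g m})) (not_le.2 hm)

/-- For regular uncountable `θ`, the existence of a `(θ,ω)`-gap in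
`(ω^ω, ≤*)` implies the existence of a `(θ,ω)`-good set. -/
theorem statement10 (θ : Cardinal.{0}) (hreg : θ.IsRegular) (hunc : ℵ₀ < θ)
    (hgap : ∃ (f : θ.ord.ToType → ℕ → ℕ) (g : ℕ → ℕ → ℕ),
      (∀ ξ η : θ.ord.ToType, ξ < η →
        LeStar (f ξ) (f η) ∧ ¬ LeStar (f η) (f ξ)) ∧
      (∀ n : ℕ, LeStar (g (n + 1)) (g n) ∧ ¬ LeStar (g n) (g (n + 1))) ∧
      (∀ (ξ : θ.ord.ToType) (n : ℕ), LeStar (f ξ) (g n)) ∧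
      ¬ ∃ h : ℕ → ℕ, (∀ ξ : θ.ord.ToType, LeStar (f ξ) h) ∧
        ∀ n : ℕ, LeStar h (g n)) :
    ∃ A : Set ((θ.ord.ToType × ℕ) × (ℕ × ℕ)), IsGoodOmega A := by
  classical
  obtain ⟨fs, gs, hmono, hgs, hfg, hnoint⟩ := hgap
  refine ⟨{p | p.2.2 = p.1.2 ∧ gs p.2.1 p.1.2 < fs p.1.1 p.1.2}, ?_, ?_, ?_⟩
  · -- clause (a)
    intro G F
    by_contra hne
    rw [Set.not_nonempty_iff_eq_empty] at hne
    apply hnoint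
    set s : ℕ → Finset ℕ := fun m => (Finset.range (m + 1)).filter (fun n => F n < m) with hs
    refine ⟨fun m => if h0 : (s m).Nonempty then (s m).inf' h0 (fun n => gs n m) else 0,
      ?_, ?_⟩
    · -- fs ξ ≤* h
      intro ξ
      apply Set.Finite.subset (Set.finite_Iic (max (G ξ) (F 0)))
      intro m hm
      simp only [Set.mem_setOf_eq] at hm
      by_contra hmle
      rw [Set.mem_Iic, not_le, max_lt_iff] at hmle
      obtain ⟨hG, hF0⟩ := hmle
      have h0 : (s m).Nonempty := ⟨0, by simp [hs, Nat.lt_succ_of_le (Nat.zero_le m), hF0]⟩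
      rw [dif_pos h0] at hm
      obtain ⟨n₀, hn₀, heq⟩ := Finset.exists_mem_eq_inf' h0 (fun n => gs n m)
      rw [heq] at hm
      have hFn₀ : F n₀ < m := (Finset.mem_filter.1 hn₀).2
      have : ((ξ, m), (n₀, m)) ∈ ({p | p.2.2 = p.1.2 ∧ gs p.2.1 p.1.2 < fs p.1.1 p.1.2} :
          Set ((θ.ord.ToType × ℕ) × (ℕ × ℕ))) ∩ VU G F :=
        ⟨⟨rfl, not_le.1 hm⟩, hG, hFn₀⟩
      rw [hne] at this
      exact this
    · -- h ≤* gs n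
      intro n
      apply Set.Finite.subset (Set.finite_Iic (max (F n) n))
      intro m hm
      simp only [Set.mem_setOf_eq] at hm
      by_contra hmle
      rw [Set.mem_Iic, not_le, max_lt_iff] at hmle
      obtain ⟨hFn, hn⟩ := hmle
      have hmem : n ∈ s m := by
        simp [hs, Nat.lt_succ_of_lt hn, hFn]
      have h0 : (s m).Nonempty := ⟨n, hmem⟩
      rw [dif_pos h0] at hm
      exact hm (Finset.inf'_le _ hmem)
  · -- clause (b)
    intro B hBA hB
    rcases B.eq_empty_or_nonempty with hBe | hBe
    · exact ⟨0, 0, by simp [hBe]⟩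
    · -- bound the first coordinates
      haveI : IsWellOrder θ.ord.ToType (· < ·) := isWellOrder_lt
      have hScard : #((fun p : (θ.ord.ToType × ℕ) × (ℕ × ℕ) => p.1.1) '' B) <
          Ordinal.cof (Ordinal.type ((· < ·) : θ.ord.ToType → θ.ord.ToType → Prop)) := by
        rw [Ordinal.type_toType, hreg.cof_eq]
        calc #((fun p : (θ.ord.ToType × ℕ) × (ℕ × ℕ) => p.1.1) '' B) ≤ #B := Cardinal.mk_image_le
        _ < #θ.ord.ToType := hB
        _ = θ := by rw [Cardinal.mk_toType, Cardinal.card_ord]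
      obtain ⟨η, hη⟩ := not_isCofinal_iff.1 (fun hc => (not_le.2 hScard) (by rw [Ordinal.cof_type]; exact Order.cof_le hc))
      refine ⟨fun ξ => sSup {m | ¬ fs ξ m ≤ fs η m}, fun n => sSup {m | ¬ fs η m ≤ gs n m}, ?_⟩
      rw [Set.eq_empty_iff_forall_notMem]
      rintro ⟨⟨ξ, m⟩, ⟨n, k⟩⟩ ⟨hpB, hgξ, hfn⟩
      obtain ⟨hk, hlt⟩ := hBA hpB
      simp only at hk hlt hgξ hfn
      rw [hk] at hfn
      have hξη : ξ < η := hη ξ ⟨_, hpB, rfl⟩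
      have h1 : fs ξ m ≤ fs η m := leStar_bound (hmono ξ η hξη).1 hgξ
      have h2 : fs η m ≤ gs n m := leStar_bound (hfg η n) hfn
      exact absurd (h1.trans h2) (not_le.2 hlt)
  · -- clause (c)
    intro E hE
    refine ⟨fun ξ => hE.toFinset.sup (fun n => sSup {m | ¬ fs ξ m ≤ gs n m}), 0, ?_⟩
    rw [Set.eq_empty_iff_forall_notMem]
    rintro ⟨⟨ξ, m⟩, ⟨n, k⟩⟩ ⟨⟨⟨hk, hlt⟩, hnE⟩, hgξ, -⟩
    simp only at hk hlt hgξ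
    simp only [Set.mem_setOf_eq] at hnE
    have hsup : sSup {m | ¬ fs ξ m ≤ gs n m} < m :=
      lt_of_le_of_lt (Finset.le_sup (f := fun n => sSup {m | ¬ fs ξ m ≤ gs n m}) (hE.mem_toFinset.2 hnE)) hgξ
    exact absurd (leStar_bound (hfg ξ n) hsup) (not_le.2 hlt)
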